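/- Let φ be a setfunction with bounded variation on a sigma-algebra with φ(∅)=0. The Choquet extension φ̂ is a convex functional on bounded measurable functions if and only if φ is submodular. -/

import Mathlib

open MeasureTheory Set

section Aux

variable {J : Type*} [MeasurableSpace J]

private def chainSet (φ : Set J → ℝ) (A : Set J) : Set ℝ :=
  {r | ∃ n : ℕ, ∃ X : ℕ → Set J, (∀ i ≤ n, MeasurableSet (X i)) ∧ X 0 = A ∧ X n = Set.univ ∧
    (∀ i < n, X i ⊆ X (i + 1)) ∧ ∑ i ∈ Finset.range n, |φ (X (i + 1)) - φ (X i)| = r}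

private noncomputable def cvar (φ : Set J → ℝ) (A : Set J) : ℝ := sSup (chainSet φ A)

variable {φ : Set J → ℝ} {K : ℝ}

private def BVB (φ : Set J → ℝ) (K : ℝ) : Prop :=
  ∀ (n : ℕ) (X : ℕ → Set J),
        (∀ i ≤ n, MeasurableSet (X i)) → X 0 = ∅ → X n = Set.univ →
        (∀ i < n, X i ⊆ X (i + 1)) →
        ∑ i ∈ Finset.range n, |φ (X (i + 1)) - φ (X i)| ≤ K

private lemma mem_chainSet_self {A : Set J} (hA : MeasurableSet A) :
    |φ Set.univ - φ A| ∈ chainSet φ A := by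
  refine ⟨1, fun i => if i = 0 then A else Set.univ, ?_, by simp, by simp, ?_, by simp⟩
  · intro i _; by_cases h : i = 0 <;> simp [h, hA]
  · intro i hi; interval_cases i; simp

private lemma prepend_chainSet {A B : Set J} (hA : MeasurableSet A) (hAB : A ⊆ B) {r : ℝ}
    (hr : r ∈ chainSet φ B) : r + |φ B - φ A| ∈ chainSet φ A := by
  obtain ⟨n, X, hmeas, h0, hn, hmono, hsum⟩ := hr
  refine ⟨n + 1, fun i => if i = 0 then A else X (i - 1), ?_, by simp, by simp [hn], ?_, ?_⟩
  · intro i hi; by_cases h : i = 0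
    · simp [h, hA]
    · simpa [h] using hmeas (i - 1) (by omega)
  · intro i hi; by_cases h : i = 0
    · simpa [h, h0] using hAB
    · have h2 : i - 1 < n := by omega
      have := hmono (i - 1) h2
      simpa [h, Nat.sub_add_cancel (by omega : 1 ≤ i)] using this
  · rw [Finset.sum_range_succ']
    have e1 : ∀ i ∈ Finset.range n,
        |φ (if i + 1 + 1 = 0 then A else X (i + 1 + 1 - 1)) -
         φ (if i + 1 = 0 then A else X (i + 1 - 1))| = |φ (X (i + 1)) - φ (X i)| := by
      intro i _; simp
    rw [Finset.sum_congr rfl e1, hsum]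
    simp [h0]

private lemma chainSet_le (hK : BVB φ K) {A : Set J} (hA : MeasurableSet A) {r : ℝ}
    (hr : r ∈ chainSet φ A) : r ≤ K := by
  have h2 := prepend_chainSet (φ := φ) MeasurableSet.empty (Set.empty_subset A) hr
  obtain ⟨n, X, hmeas, h0, hn, hmono, hsum⟩ := h2
  have h4 := hK n X hmeas h0 hn hmono
  rw [hsum] at h4
  have h3 : (0:ℝ) ≤ |φ A - φ ∅| := abs_nonneg _
  linarith

private lemma bddAbove_chainSet (hK : BVB φ K) {A : Set J} (hA : MeasurableSet A) :
    BddAbove (chainSet φ A) :=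
  ⟨K, fun _ hr => chainSet_le hK hA hr⟩

private lemma cvar_le_K (hK : BVB φ K) {A : Set J} (hA : MeasurableSet A) : cvar φ A ≤ K :=
  csSup_le ⟨_, mem_chainSet_self hA⟩ (fun _ hr => chainSet_le hK hA hr)

private lemma cvar_nonneg (hK : BVB φ K) {A : Set J} (hA : MeasurableSet A) : 0 ≤ cvar φ A :=
  le_trans (abs_nonneg _) (le_csSup (bddAbove_chainSet hK hA) (mem_chainSet_self hA))

private lemma abs_le_cvar (hK : BVB φ K) {A : Set J} (hA : MeasurableSet A) :
    |φ Set.univ - φ A| ≤ cvar φ A :=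
  le_csSup (bddAbove_chainSet hK hA) (mem_chainSet_self hA)

private lemma cvar_add_le (hK : BVB φ K) {A B : Set J} (hA : MeasurableSet A)
    (hB : MeasurableSet B) (hAB : A ⊆ B) : cvar φ B + |φ B - φ A| ≤ cvar φ A := by
  have hne : (chainSet φ B).Nonempty := ⟨_, mem_chainSet_self hB⟩
  have h1 : ∀ r ∈ chainSet φ B, r ≤ cvar φ A - |φ B - φ A| := by
    intro r hr
    have h2 := le_csSup (bddAbove_chainSet hK hA) (prepend_chainSet hA hAB hr)
    have : r + |φ B - φ A| ≤ cvar φ A := h2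
    linarith
  have h3 : sSup (chainSet φ B) ≤ cvar φ A - |φ B - φ A| := csSup_le hne h1
  have : cvar φ B ≤ cvar φ A - |φ B - φ A| := h3
  linarith

private lemma cvar_mono (hK : BVB φ K) {A B : Set J} (hA : MeasurableSet A)
    (hB : MeasurableSet B) (hAB : A ⊆ B) : cvar φ B ≤ cvar φ A := by
  have h1 := cvar_add_le hK hA hB hAB
  have h2 := abs_nonneg (φ B - φ A)
  linarith

private lemma abs_sub_le_cvar (hK : BVB φ K) {A B : Set J} (hA : MeasurableSet A)
    (hB : MeasurableSet B) (hAB : A ⊆ B) : |φ B - φ A| ≤ cvar φ A - cvar φ B := by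
  have := cvar_add_le hK hA hB hAB
  linarith

end Aux

section Fun

variable {J : Type*} [MeasurableSpace J] {φ : Set J → ℝ} {K : ℝ}

private lemma lev_meas {w : J → ℝ} (hw : Measurable w) (t : ℝ) :
    MeasurableSet {x | t ≤ w x} := measurableSet_le measurable_const hw

private lemma lev_anti {w : J → ℝ} {s t : ℝ} (hst : s ≤ t) :
    {x | t ≤ w x} ⊆ {x | s ≤ w x} := fun x hx => le_trans hst hx

private lemma Wfun_mono (hK : BVB φ K) {w : J → ℝ} (hw : Measurable w) :
    Monotone (fun t => cvar φ {x | t ≤ w x}) := by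
  intro s t hst
  exact cvar_mono hK (lev_meas hw t) (lev_meas hw s) (lev_anti hst)

private lemma Wfun_sub_mono (hK : BVB φ K) {w : J → ℝ} (hw : Measurable w) :
    Monotone (fun t => cvar φ {x | t ≤ w x} - φ {x | t ≤ w x}) := by
  intro s t hst
  have h := abs_sub_le_cvar hK (lev_meas hw t) (lev_meas hw s) (lev_anti hst)
  have h2 : φ {x | t ≤ w x} - φ {x | s ≤ w x} ≤ |φ {x | s ≤ w x} - φ {x | t ≤ w x}| := by
    rw [abs_sub_comm]; exact le_abs_self _
  simp only
  linarith

private lemma pfun_measurable (hK : BVB φ K) {w : J → ℝ} (hw : Measurable w) :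
    Measurable (fun t => φ {x | t ≤ w x}) := by
  have h : (fun t => φ {x | t ≤ w x}) =
      (fun t => cvar φ {x | t ≤ w x}) - (fun t => cvar φ {x | t ≤ w x} - φ {x | t ≤ w x}) := by
    funext t; simp
  rw [h]
  exact ((Wfun_mono hK hw).measurable).sub ((Wfun_sub_mono hK hw).measurable)

private lemma pfun_bound (hK : BVB φ K) {w : J → ℝ} (hw : Measurable w) (t : ℝ) :
    |φ {x | t ≤ w x}| ≤ |φ Set.univ| + K := by
  have h1 := abs_le_cvar hK (lev_meas hw t)
  have h2 := cvar_le_K hK (lev_meas hw t)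
  have h3 : |φ {x | t ≤ w x}| - |φ Set.univ| ≤ |φ Set.univ - φ {x | t ≤ w x}| := by
    have := abs_sub_abs_le_abs_sub (φ {x | t ≤ w x}) (φ Set.univ)
    have e : |φ {x | t ≤ w x} - φ Set.univ| = |φ Set.univ - φ {x | t ≤ w x}| := abs_sub_comm _ _
    linarith
  linarith

private lemma pfun_integrableOn (hK : BVB φ K) {w : J → ℝ} (hw : Measurable w) (a b : ℝ) :
    IntegrableOn (fun t => φ {x | t ≤ w x}) (Set.Ioc a b) := by
  refine Integrable.mono' (g := fun _ => |φ Set.univ| + K)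
    (integrableOn_const (lt_top_iff_ne_top.mp ?_)) ((pfun_measurable hK hw).aestronglyMeasurable) ?_
  · rw [Real.volume_Ioc]; exact ENNReal.ofReal_lt_top
  · filter_upwards with t
    simpa [Real.norm_eq_abs] using pfun_bound hK hw t

end Fun

section Approx

variable {J : Type*} [MeasurableSpace J] {φ : Set J → ℝ} {K : ℝ}

private lemma Ioc_eq_biUnion (c δ : ℝ) (hδ : 0 ≤ δ) (n : ℕ) :
    Set.Ioc c (c + n * δ) = ⋃ m ∈ Finset.range n, Set.Ioc (c + m * δ) (c + (m + 1) * δ) := by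
  induction n with
  | zero => simp
  | succ n ih =>
    rw [Finset.range_add_one, Finset.set_biUnion_insert, ← ih, Set.union_comm]
    have h0 : (0:ℝ) ≤ n * δ := mul_nonneg (Nat.cast_nonneg n) hδ
    have h1 : c ≤ c + n * δ := by linarith
    have h2 : c + (n:ℝ) * δ ≤ c + ((n:ℝ) + 1) * δ := by nlinarith
    push_cast
    rw [Set.Ioc_union_Ioc_eq_Ioc h1 h2]

private lemma approx (hK : BVB φ K) {w : J → ℝ} (hw : Measurable w) {c δ : ℝ} (hδ : 0 < δ)
    (n : ℕ) (hlb : ∀ x, c ≤ w x) :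
    |(∫ t in Set.Ioc c (c + n * δ), φ {x | t ≤ w x}) -
      δ * ∑ m ∈ Finset.range n, φ {x | c + (m + 1) * δ ≤ w x}| ≤ δ * K := by
  have hint : ∀ a b : ℝ, IntegrableOn (fun t => φ {x | t ≤ w x}) (Set.Ioc a b) :=
    pfun_integrableOn hK hw
  have hdisj : (↑(Finset.range n) : Set ℕ).Pairwise
      (Function.onFun Disjoint fun m : ℕ => Set.Ioc (c + m * δ) (c + (m + 1) * δ)) := by
    intro i _ j _ hij
    rcases lt_or_gt_of_ne hij with h | h
    · rw [Function.onFun, Set.Ioc_disjoint_Ioc]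
      have : ((i:ℝ) + 1) ≤ (j:ℝ) := by exact_mod_cast h
      refine le_trans inf_le_left (le_trans ?_ le_sup_right)
      nlinarith
    · rw [Function.onFun, Set.Ioc_disjoint_Ioc]
      have : ((j:ℝ) + 1) ≤ (i:ℝ) := by exact_mod_cast h
      refine le_trans inf_le_right (le_trans ?_ le_sup_left)
      nlinarith
  have hsplit : (∫ t in Set.Ioc c (c + n * δ), φ {x | t ≤ w x}) =
      ∑ m ∈ Finset.range n, ∫ t in Set.Ioc (c + m * δ) (c + (m + 1) * δ), φ {x | t ≤ w x} := by
    rw [Ioc_eq_biUnion c δ hδ.le n]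
    exact integral_biUnion_finset _ (fun i _ => measurableSet_Ioc) hdisj (fun i _ => hint _ _)
  rw [hsplit, Finset.mul_sum, ← Finset.sum_sub_distrib]
  refine le_trans (Finset.abs_sum_le_sum_abs _ _) ?_
  have hterm : ∀ m ∈ Finset.range n,
      |(∫ t in Set.Ioc (c + m * δ) (c + (m + 1) * δ), φ {x | t ≤ w x}) -
        δ * φ {x | c + (m + 1) * δ ≤ w x}| ≤
      δ * (cvar φ {x | c + (m + 1) * δ ≤ w x} - cvar φ {x | c + m * δ ≤ w x}) := by
    intro m _
    set a := c + m * δ with ha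
    set b := c + (m + 1) * δ with hb
    have hab : a ≤ b := by rw [ha, hb]; push_cast; nlinarith
    have hba : b - a = δ := by rw [ha, hb]; push_cast; ring
    have hconst : δ * φ {x | b ≤ w x} = ∫ t in Set.Ioc a b, φ {x | b ≤ w x} := by
      rw [setIntegral_const, Real.volume_real_Ioc, max_eq_left (by linarith), hba,
        smul_eq_mul]
    rw [hconst, ← integral_sub (hint a b) (integrableOn_const (lt_top_iff_ne_top.mp (by
      rw [Real.volume_Ioc]; exact ENNReal.ofReal_lt_top)))]
    have habs := norm_integral_le_integral_norm (μ := volume.restrict (Set.Ioc a b))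
      (f := fun t => φ {x | t ≤ w x} - φ {x | b ≤ w x})
    rw [Real.norm_eq_abs] at habs
    refine le_trans habs ?_
    have hmono2 : ∀ t ∈ Set.Ioc a b,
        ‖φ {x | t ≤ w x} - φ {x | b ≤ w x}‖ ≤
          cvar φ {x | b ≤ w x} - cvar φ {x | a ≤ w x} := by
      intro t ht
      rw [Real.norm_eq_abs]
      have h1 := abs_sub_le_cvar hK (lev_meas hw b) (lev_meas hw t) (lev_anti ht.2)
      have h2 : cvar φ {x | a ≤ w x} ≤ cvar φ {x | t ≤ w x} :=
        cvar_mono hK (lev_meas hw t) (lev_meas hw a) (lev_anti ht.1.le)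
      linarith
    have := setIntegral_mono_on
      (((hint a b).sub (integrableOn_const (lt_top_iff_ne_top.mp (by
        rw [Real.volume_Ioc]; exact ENNReal.ofReal_lt_top)))).norm)
      (integrableOn_const (lt_top_iff_ne_top.mp (by rw [Real.volume_Ioc]; exact ENNReal.ofReal_lt_top)))
      measurableSet_Ioc hmono2
    refine le_trans this ?_
    rw [setIntegral_const, Real.volume_real_Ioc, max_eq_left (by linarith), hba,
      smul_eq_mul]
  refine le_trans (Finset.sum_le_sum hterm) ?_
  have htel : ∑ m ∈ Finset.range n,
      (cvar φ {x | c + (m + 1) * δ ≤ w x} - cvar φ {x | c + m * δ ≤ w x}) =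
      cvar φ {x | c + n * δ ≤ w x} - cvar φ {x | c + 0 * δ ≤ w x} := by
    have := Finset.sum_range_sub (fun m : ℕ => cvar φ {x | c + m * δ ≤ w x}) n
    simpa using this
  rw [← Finset.mul_sum, htel]
  have hle1 : cvar φ {x | c + n * δ ≤ w x} ≤ K := cvar_le_K hK (lev_meas hw _)
  have hge0 : 0 ≤ cvar φ {x | c + 0 * δ ≤ w x} := cvar_nonneg hK (lev_meas hw _)
  nlinarith

end Approx

section Discrete

variable {J : Type*} [MeasurableSpace J] {φ : Set J → ℝ}

private lemma claimStar
    (hsub : ∀ X Y : Set J, MeasurableSet X → MeasurableSet Y →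
      φ (X ∪ Y) + φ (X ∩ Y) ≤ φ X + φ Y)
    (C : ℕ → Set J) (B : Set J) (hC : ∀ k, MeasurableSet (C k)) (hB : MeasurableSet B)
    (hCanti : Antitone C) (N : ℕ) :
    ∑ m ∈ Finset.range N, φ (C (m + 1) ∪ (C m ∩ B)) ≤
      (∑ m ∈ Finset.range N, φ (C (m + 1))) + (φ (C 0 ∩ B) - φ (C N ∩ B)) := by
  have hterm : ∀ m ∈ Finset.range N, φ (C (m + 1) ∪ (C m ∩ B)) ≤
      φ (C (m + 1)) + (φ (C m ∩ B) - φ (C (m + 1) ∩ B)) := by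
    intro m _
    have h := hsub (C (m + 1)) (C m ∩ B) (hC _) ((hC m).inter hB)
    have heq : C (m + 1) ∩ (C m ∩ B) = C (m + 1) ∩ B := by
      rw [← Set.inter_assoc, Set.inter_eq_self_of_subset_left (hCanti (Nat.le_succ m))]
    rw [heq] at h; linarith
  refine le_trans (Finset.sum_le_sum hterm) ?_
  rw [Finset.sum_add_distrib, Finset.sum_range_sub' (fun m => φ (C m ∩ B)) N]

private lemma Cchain_meas {A B : ℕ → Set J} (hA : ∀ k, MeasurableSet (A k))
    (hB : ∀ k, MeasurableSet (B k)) (m : ℕ) :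
    MeasurableSet (⋃ i ∈ Finset.range (m + 1), A i ∩ B (m - i)) :=
  (Finset.range (m + 1)).measurableSet_biUnion (fun i _ => (hA i).inter (hB (m - i)))

private lemma Cchain_anti {A B : ℕ → Set J} (hAa : Antitone A) (hBa : Antitone B) :
    Antitone (fun m => ⋃ i ∈ Finset.range (m + 1), A i ∩ B (m - i)) := by
  intro m m' hmm' x hx
  simp only [Set.mem_iUnion, Finset.mem_range, Set.mem_inter_iff] at hx ⊢
  obtain ⟨i, hi, hxA, hxB⟩ := hx
  rcases le_or_gt i m with h | h
  · exact ⟨i, by omega, hxA, hBa (by omega) hxB⟩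
  · refine ⟨m, by omega, hAa (by omega) hxA, ?_⟩
    have : m - m = 0 := by omega
    rw [this]
    exact hBa (Nat.zero_le _) hxB

private lemma lemD (h0 : φ ∅ = 0)
    (hsub : ∀ X Y : Set J, MeasurableSet X → MeasurableSet Y →
      φ (X ∪ Y) + φ (X ∩ Y) ≤ φ X + φ Y) :
    ∀ (j : ℕ) (A B : ℕ → Set J) (nA N : ℕ),
      (∀ k, MeasurableSet (A k)) → (∀ k, MeasurableSet (B k)) →
      Antitone A → Antitone B → A 0 = Set.univ → B 0 = Set.univ →
      (∀ k, 1 ≤ k → nA ≤ k → A k = ∅) → (∀ k, 1 ≤ k → j ≤ k → B k = ∅) →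
      nA + j + 1 ≤ N →
      ∑ m ∈ Finset.range N, φ (⋃ i ∈ Finset.range (m + 1 + 1), A i ∩ B (m + 1 - i)) ≤
        (∑ m ∈ Finset.range N, φ (A (m + 1))) + ∑ m ∈ Finset.range N, φ (B (m + 1)) := by
  have base : ∀ (A B : ℕ → Set J) (N : ℕ), A 0 = Set.univ → B 0 = Set.univ →
      (∀ k, 1 ≤ k → B k = ∅) →
      ∑ m ∈ Finset.range N, φ (⋃ i ∈ Finset.range (m + 1 + 1), A i ∩ B (m + 1 - i)) ≤
        (∑ m ∈ Finset.range N, φ (A (m + 1))) + ∑ m ∈ Finset.range N, φ (B (m + 1)) := by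
    intro A B N hA0 hB0 hBtriv
    have hCeq : ∀ m : ℕ,
        (⋃ i ∈ Finset.range (m + 1 + 1), A i ∩ B (m + 1 - i)) = A (m + 1) := by
      intro m
      ext x
      simp only [Set.mem_iUnion, Finset.mem_range, Set.mem_inter_iff]
      constructor
      · rintro ⟨i, hi, hxA, hxB⟩
        rcases eq_or_lt_of_le (by omega : i ≤ m + 1) with h | h
        · rwa [← h]
        · exfalso
          have : B (m + 1 - i) = ∅ := hBtriv _ (by omega)
          rw [this] at hxB
          exact hxB
      · intro hx
        refine ⟨m + 1, by omega, hx, ?_⟩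
        have : m + 1 - (m + 1) = 0 := by omega
        rw [this, hB0]; trivial
    have hBz : ∀ m ∈ Finset.range N, φ (B (m + 1)) = 0 := by
      intro m _; rw [hBtriv (m + 1) (by omega), h0]
    rw [Finset.sum_congr rfl (fun m _ => by rw [hCeq m]),
      Finset.sum_congr rfl hBz]
    simp
  intro j
  induction j with
  | zero =>
    intro A B nA N hAm hBm hAa hBa hA0 hB0 hAe hBe hN
    exact base A B N hA0 hB0 (fun k hk => hBe k hk (Nat.zero_le _))
  | succ j ih =>
    intro A B nA N hAm hBm hAa hBa hA0 hB0 hAe hBe hN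
    rcases Nat.eq_zero_or_pos j with hj | hj
    · subst hj
      exact base A B N hA0 hB0 (fun k hk => hBe k hk hk)
    -- peel the top layer j of B
    set B' : ℕ → Set J := fun k => if 1 ≤ k ∧ j ≤ k then ∅ else B k with hB'def
    have hB'sub : ∀ k, B' k ⊆ B k := by
      intro k; rw [hB'def]; dsimp only; split
      · exact Set.empty_subset _
      · exact le_refl _
    have hB'm : ∀ k, MeasurableSet (B' k) := by
      intro k; rw [hB'def]; dsimp only; split
      · exact MeasurableSet.empty
      · exact hBm k
    have hB'a : Antitone B' := by
      intro k k' hkk'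
      rw [hB'def]; dsimp only
      by_cases h' : 1 ≤ k' ∧ j ≤ k'
      · rw [if_pos h']; exact Set.empty_subset _
      · rw [if_neg h']
        by_cases h : 1 ≤ k ∧ j ≤ k
        · exact absurd ⟨by omega, by omega⟩ h'
        · rw [if_neg h]; exact hBa hkk'
    have hB'0 : B' 0 = Set.univ := by
      rw [hB'def]; dsimp only; rw [if_neg (by omega), hB0]
    have hB'e : ∀ k, 1 ≤ k → j ≤ k → B' k = ∅ := by
      intro k h1 h2; rw [hB'def]; dsimp only; rw [if_pos ⟨h1, h2⟩]
    have hB'eq : ∀ k, ¬(1 ≤ k ∧ j ≤ k) → B' k = B k := by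
      intro k h; rw [hB'def]; dsimp only; rw [if_neg h]
    set C' : ℕ → Set J := fun m => ⋃ i ∈ Finset.range (m + 1), A i ∩ B' (m - i) with hC'def
    have hC'm : ∀ k, MeasurableSet (C' k) := fun k => Cchain_meas hAm hB'm k
    have hC'a : Antitone C' := Cchain_anti hAa hB'a
    -- the key set identity
    have hCid : ∀ m : ℕ,
        (⋃ i ∈ Finset.range (m + 1 + 1), A i ∩ B (m + 1 - i)) =
          C' (m + 1) ∪ (C' m ∩ B j) := by
      intro m
      rw [hC'def]
      ext x
      simp only [Set.mem_union, Set.mem_iUnion, Finset.mem_range, Set.mem_inter_iff]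
      constructor
      · rintro ⟨i, hi, hxA, hxB⟩
        rcases lt_trichotomy (m + 1 - i) j with h | h | h
        · left
          exact ⟨i, hi, hxA, by rw [hB'eq _ (by omega)]; exact hxB⟩
        · right
          have hxBj : x ∈ B j := by rwa [h] at hxB
          have hij2 : i < m + 1 := by omega
          refine ⟨⟨i, hij2, hxA, ?_⟩, hxBj⟩
          have hmi : m - i = j - 1 := by omega
          rw [hmi, hB'eq (j - 1) (by omega)]
          exact hBa (show j - 1 ≤ j by omega) hxBj
        · exfalso
          have : B (m + 1 - i) = ∅ := hBe _ (by omega) (by omega)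
          rw [this] at hxB; exact hxB
      · rintro (⟨i, hi, hxA, hxB⟩ | ⟨⟨i, hi, hxA, hxB⟩, hxBj⟩)
        · refine ⟨i, hi, hxA, hB'sub _ hxB⟩
        · by_cases hc : 1 ≤ m - i ∧ j ≤ m - i
          · rw [hB'e _ hc.1 hc.2] at hxB; exact absurd hxB (Set.notMem_empty x)
          · refine ⟨i, by omega, hxA, hBa (show m + 1 - i ≤ j by omega) hxBj⟩
    -- apply claimStar
    have hCS := claimStar hsub C' (B j) hC'm (hBm j) hC'a N
    -- C' 0 ∩ B j = B j
    have hC'0 : C' 0 ∩ B j = B j := by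
      rw [hC'def]
      have : (⋃ i ∈ Finset.range (0 + 1), A i ∩ B' (0 - i)) = Set.univ := by
        simp [hA0, hB'0]
      dsimp only at this ⊢
      rw [this, Set.univ_inter]
    -- C' N = ∅
    have hC'N : C' N = ∅ := by
      rw [hC'def]
      dsimp only
      ext x
      simp only [Set.mem_iUnion, Finset.mem_range, Set.mem_inter_iff, Set.mem_empty_iff_false,
        iff_false]
      rintro ⟨i, hi, hxA, hxB⟩
      by_cases hc : 1 ≤ N - i ∧ j ≤ N - i
      · rw [hB'e _ hc.1 hc.2] at hxB; exact hxB
      · have : A i = ∅ := hAe i (by omega) (by omega)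
        rw [this] at hxA; exact hxA
    rw [hC'N] at hCS
    rw [Set.empty_inter, h0] at hCS
    rw [hC'0] at hCS
    -- IH
    have hIH := ih A B' nA N hAm hB'm hAa hB'a hA0 hB'0 hAe hB'e (by omega)
    -- B' sums
    have hBsum : ∑ m ∈ Finset.range N, φ (B (m + 1)) =
        (∑ m ∈ Finset.range N, φ (B' (m + 1))) + φ (B j) := by
      have hterm : ∀ m ∈ Finset.range N, φ (B (m + 1)) =
          φ (B' (m + 1)) + (if m = j - 1 then φ (B j) else 0) := by
        intro m _
        by_cases hm : m = j - 1
        · rw [if_pos hm]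
          have hmj : m + 1 = j := by omega
          rw [hmj, hB'e j (by omega) le_rfl, h0]
          ring
        · rw [if_neg hm]
          by_cases hc : 1 ≤ m + 1 ∧ j ≤ m + 1
          · have h1 : B (m + 1) = ∅ := hBe _ (by omega) (by omega)
            have h2 : B' (m + 1) = ∅ := hB'e _ hc.1 hc.2
            rw [h1, h2]; ring
          · rw [hB'eq _ hc]; ring
      rw [Finset.sum_congr rfl hterm, Finset.sum_add_distrib,
        Finset.sum_ite_eq' (Finset.range N) (j - 1) (fun _ => φ (B j)),
        if_pos (Finset.mem_range.mpr (by omega))]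
    rw [Finset.sum_congr rfl (fun m _ => by rw [hCid m])]
    have hCS' : ∑ m ∈ Finset.range N, φ (C' (m + 1) ∪ (C' m ∩ B j)) ≤
        (∑ m ∈ Finset.range N, φ (C' (m + 1))) + φ (B j) := by linarith
    calc ∑ m ∈ Finset.range N, φ (C' (m + 1) ∪ (C' m ∩ B j))
        ≤ (∑ m ∈ Finset.range N, φ (C' (m + 1))) + φ (B j) := hCS'
      _ ≤ ((∑ m ∈ Finset.range N, φ (A (m + 1))) + ∑ m ∈ Finset.range N, φ (B' (m + 1)))
          + φ (B j) := by
          have : ∑ m ∈ Finset.range N, φ (C' (m + 1)) ≤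
              (∑ m ∈ Finset.range N, φ (A (m + 1))) + ∑ m ∈ Finset.range N, φ (B' (m + 1)) := by
            refine le_trans (le_of_eq ?_) hIH
            exact Finset.sum_congr rfl (fun m _ => by rw [hC'def])
          linarith
      _ = (∑ m ∈ Finset.range N, φ (A (m + 1))) + ∑ m ∈ Finset.range N, φ (B (m + 1)) := by
          rw [hBsum]; ring

end Discrete

section Assemble

variable {J : Type*} [MeasurableSpace J] {φ : Set J → ℝ} {K : ℝ} {hat : (J → ℝ) → ℝ}

private lemma hat_Ioc (h0 : φ ∅ = 0)
    (hhat : ∀ (f : J → ℝ) (c : ℝ), (∀ x, c ≤ f x) →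
      hat f = (∫ t in Set.Ioi c, φ {x | t ≤ f x}) + c * φ Set.univ)
    {w : J → ℝ} {c M : ℝ} (hlb : ∀ x, c ≤ w x) (hub : ∀ x, w x ≤ M) :
    hat w = (∫ t in Set.Ioc c M, φ {x | t ≤ w x}) + c * φ Set.univ := by
  rw [hhat w c hlb]
  congr 1
  have heq : Set.EqOn (fun t => φ {x | t ≤ w x})
      (fun t => (Set.Ioc c M).indicator (fun t => φ {x | t ≤ w x}) t) (Set.Ioi c) := by
    intro t ht
    show φ {x | t ≤ w x} = (Set.Ioc c M).indicator (fun t => φ {x | t ≤ w x}) t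
    by_cases hM : t ≤ M
    · rw [Set.indicator_of_mem (Set.mem_Ioc.mpr ⟨ht, hM⟩)]
    · rw [Set.indicator_of_notMem (fun h => hM (Set.mem_Ioc.mp h).2)]
      have h1 : {x | t ≤ w x} = ∅ := by
        ext x; simp only [Set.mem_setOf_eq, Set.mem_empty_iff_false, iff_false, not_le]
        exact lt_of_le_of_lt (hub x) (lt_of_not_ge hM)
      simp only [h1, h0]
  rw [setIntegral_congr_fun measurableSet_Ioi heq, setIntegral_indicator measurableSet_Ioc,
    Set.inter_eq_self_of_subset_right Set.Ioc_subset_Ioi_self]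

private lemma subadd (h0 : φ ∅ = 0) (hK : BVB φ K)
    (hsub : ∀ X Y : Set J, MeasurableSet X → MeasurableSet Y →
      φ (X ∪ Y) + φ (X ∩ Y) ≤ φ X + φ Y)
    (hhat : ∀ (f : J → ℝ) (c : ℝ), (∀ x, c ≤ f x) →
      hat f = (∫ t in Set.Ioi c, φ {x | t ≤ f x}) + c * φ Set.univ)
    (u v : J → ℝ) (hu : Measurable u) (hv : Measurable v)
    (Mu Mv : ℝ) (hMu : ∀ x, |u x| ≤ Mu) (hMv : ∀ x, |v x| ≤ Mv) :
    hat (fun x => u x + v x) ≤ hat u + hat v := by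
  have hKnn : 0 ≤ K :=
    le_trans (cvar_nonneg hK MeasurableSet.univ) (cvar_le_K hK MeasurableSet.univ)
  set c : ℝ := -(|Mu| + |Mv| + 1) with hc
  set M : ℝ := |Mu| + |Mv| + 1 with hM
  have hMnn : (0:ℝ) < |Mu| + |Mv| + 1 := by
    have h1 : (0:ℝ) ≤ |Mu| := abs_nonneg _
    have h2 : (0:ℝ) ≤ |Mv| := abs_nonneg _
    linarith
  have hcM : c < M := by
    rw [hc, hM]; linarith
  clear_value c M
  have hlbu : ∀ x, c ≤ u x := by
    intro x
    have := (abs_le.mp (le_trans (hMu x) (le_abs_self Mu))).1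
    rw [hc]; have h2 : (0:ℝ) ≤ |Mv| := abs_nonneg _; linarith
  have hubu : ∀ x, u x ≤ M := by
    intro x
    have := (abs_le.mp (le_trans (hMu x) (le_abs_self Mu))).2
    rw [hM]; have h2 : (0:ℝ) ≤ |Mv| := abs_nonneg _; linarith
  have hlbv : ∀ x, c ≤ v x := by
    intro x
    have := (abs_le.mp (le_trans (hMv x) (le_abs_self Mv))).1
    rw [hc]; have h2 : (0:ℝ) ≤ |Mu| := abs_nonneg _; linarith
  have hubv : ∀ x, v x ≤ M := by
    intro x
    have := (abs_le.mp (le_trans (hMv x) (le_abs_self Mv))).2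
    rw [hM]; have h2 : (0:ℝ) ≤ |Mu| := abs_nonneg _; linarith
  -- main quantitative step
  have main : ∀ n : ℕ, 1 ≤ n →
      hat (fun x => u x + v x) ≤ hat u + hat v + 7 * K * ((M - c) / n) := by
    intro n hn
    set δ : ℝ := (M - c) / n with hδdef
    have hnR : (0:ℝ) < n := by exact_mod_cast hn
    have hδ : 0 < δ := by
      rw [hδdef]; exact div_pos (by linarith) hnR
    have hMc : c + (n:ℝ) * δ = M := by rw [hδdef]; field_simp; ring
    -- chains
    set A : ℕ → Set J := fun m => {x | c + (m:ℝ) * δ ≤ u x} with hA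
    set B : ℕ → Set J := fun m => {x | c + (m:ℝ) * δ ≤ v x} with hB
    set D : ℕ → Set J := fun m => {x | 2 * c + (m:ℝ) * δ ≤ u x + v x} with hD
    set w : J → ℝ := fun x =>
      2 * c + δ * ((⌊(u x - c) / δ⌋ + ⌊(v x - c) / δ⌋ : ℤ) : ℝ) with hw
    set C : ℕ → Set J := fun m => {x | 2 * c + (m:ℝ) * δ ≤ w x} with hC
    clear_value A B D C w δ
    have hδne : δ ≠ 0 := hδ.ne'
    have hwm : Measurable w := by
      rw [hw]
      have h1 : Measurable fun x => (⌊(u x - c) / δ⌋ : ℤ) :=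
        ((hu.sub measurable_const).div_const δ).floor
      have h2 : Measurable fun x => (⌊(v x - c) / δ⌋ : ℤ) :=
        ((hv.sub measurable_const).div_const δ).floor
      exact measurable_const.add ((measurable_from_top.comp (h1.add h2)).const_mul δ)
    have hfloor_u : ∀ x, 0 ≤ ⌊(u x - c) / δ⌋ := by
      intro x
      exact Int.floor_nonneg.mpr (div_nonneg (by linarith [hlbu x]) hδ.le)
    have hfloor_v : ∀ x, 0 ≤ ⌊(v x - c) / δ⌋ := by
      intro x
      exact Int.floor_nonneg.mpr (div_nonneg (by linarith [hlbv x]) hδ.le)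
    have hwlb : ∀ x, 2 * c ≤ w x := by
      intro x
      rw [hw]
      have h1 : (0:ℝ) ≤ ((⌊(u x - c) / δ⌋ + ⌊(v x - c) / δ⌋ : ℤ) : ℝ) := by
        have := hfloor_u x; have := hfloor_v x
        exact_mod_cast by omega
      have h2 := mul_nonneg hδ.le h1
      linarith
    have hwleuv : ∀ x, w x ≤ u x + v x := by
      intro x
      rw [hw]
      push_cast
      have h1 : (⌊(u x - c) / δ⌋ : ℝ) ≤ (u x - c) / δ := Int.floor_le _
      have h2 : (⌊(v x - c) / δ⌋ : ℝ) ≤ (v x - c) / δ := Int.floor_le _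
      have h3 : δ * ((u x - c) / δ) = u x - c := by
        rw [mul_comm, div_mul_cancel₀ _ hδne]
      have h4 : δ * ((v x - c) / δ) = v x - c := by
        rw [mul_comm, div_mul_cancel₀ _ hδne]
      nlinarith
    have huvlew : ∀ x, u x + v x ≤ w x + 2 * δ := by
      intro x
      rw [hw]
      push_cast
      have h1 : (u x - c) / δ - 1 < (⌊(u x - c) / δ⌋ : ℝ) := Int.sub_one_lt_floor _
      have h2 : (v x - c) / δ - 1 < (⌊(v x - c) / δ⌋ : ℝ) := Int.sub_one_lt_floor _
      have h3 : δ * ((u x - c) / δ) = u x - c := by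
        rw [mul_comm, div_mul_cancel₀ _ hδne]
      have h4 : δ * ((v x - c) / δ) = v x - c := by
        rw [mul_comm, div_mul_cancel₀ _ hδne]
      nlinarith
    -- the union identity
    have hCw : ∀ m : ℕ,
        (⋃ i ∈ Finset.range (m + 1), A i ∩ B (m - i)) = C m := by
      intro m
      ext x
      simp only [hA, hB, hC, Set.mem_iUnion, Finset.mem_range, Set.mem_inter_iff,
        Set.mem_setOf_eq]
      constructor
      · rintro ⟨i, hi, hxA, hxB⟩
        have hfu : (i : ℤ) ≤ ⌊(u x - c) / δ⌋ := by
          apply Int.le_floor.mpr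
          rw [le_div_iff₀ hδ]
          push_cast
          linarith
        have hfv : ((m - i : ℕ) : ℤ) ≤ ⌊(v x - c) / δ⌋ := by
          apply Int.le_floor.mpr
          rw [le_div_iff₀ hδ]
          push_cast
          linarith
        have hsum : (m : ℤ) ≤ ⌊(u x - c) / δ⌋ + ⌊(v x - c) / δ⌋ := by
          have : ((m - i : ℕ) : ℤ) = (m : ℤ) - (i : ℤ) := by
            have : i ≤ m := by omega
            push_cast [this]
            ring
          omega
        have h6 : (m : ℝ) ≤ ((⌊(u x - c) / δ⌋ + ⌊(v x - c) / δ⌋ : ℤ) : ℝ) := by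
          exact_mod_cast hsum
        have h7 := mul_le_mul_of_nonneg_left h6 hδ.le
        rw [hw]
        show 2 * c + (m:ℝ) * δ ≤ 2 * c + δ * ((⌊(u x - c) / δ⌋ + ⌊(v x - c) / δ⌋ : ℤ) : ℝ)
        linarith
      · intro hx
        rw [hw] at hx
        have hx' : 2 * c + (m:ℝ) * δ ≤
            2 * c + δ * ((⌊(u x - c) / δ⌋ + ⌊(v x - c) / δ⌋ : ℤ) : ℝ) := hx
        clear hx
        set au := ⌊(u x - c) / δ⌋ with hau
        set bv := ⌊(v x - c) / δ⌋ with hbv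
        have hsum : (m : ℤ) ≤ au + bv := by
          have h1 : (m : ℝ) * δ ≤ δ * ((au + bv : ℤ) : ℝ) := by
            push_cast at hx' ⊢
            linarith
          have h2 : (m : ℝ) ≤ ((au + bv : ℤ) : ℝ) := by
            rwa [mul_comm (m:ℝ) δ, mul_le_mul_iff_right₀ hδ] at h1
          exact_mod_cast h2
        have hau0 : 0 ≤ au := hfloor_u x
        have hbv0 : 0 ≤ bv := hfloor_v x
        refine ⟨min m au.toNat, by omega, ?_, ?_⟩
        · have h1 : ((min m au.toNat : ℕ) : ℝ) ≤ (au : ℝ) := by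
            have : (min m au.toNat : ℤ) ≤ au := by omega
            exact_mod_cast this
          have h2 : (au : ℝ) ≤ (u x - c) / δ := Int.floor_le _
          have h3 : ((min m au.toNat : ℕ) : ℝ) * δ ≤ u x - c :=
            (le_div_iff₀ hδ).mp (le_trans h1 h2)
          linarith
        · rcases eq_or_lt_of_le (Nat.le_of_lt_succ (by omega : min m au.toNat < m + 1)) with
            he | hlt
          · have : m - min m au.toNat = 0 := by omega
            rw [this]
            simpa using hlbv x
          · have hia : min m au.toNat = au.toNat := by omega
            have h1 : ((m - min m au.toNat : ℕ) : ℤ) ≤ bv := by omega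
            have h2 : ((m - min m au.toNat : ℕ) : ℝ) ≤ (bv : ℝ) := by exact_mod_cast h1
            have h3 : (bv : ℝ) ≤ (v x - c) / δ := Int.floor_le _
            have h4 : ((m - min m au.toNat : ℕ) : ℝ) ≤ (v x - c) / δ := le_trans h2 h3
            rw [le_div_iff₀ hδ] at h4
            linarith
    -- basic chain properties
    have hAm : ∀ k, MeasurableSet (A k) := by
      intro k; rw [hA]; exact lev_meas hu _
    have hBm : ∀ k, MeasurableSet (B k) := by
      intro k; rw [hB]; exact lev_meas hv _
    have hDm : ∀ k, MeasurableSet (D k) := by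
      intro k; rw [hD]; exact lev_meas (hu.add hv) _
    have hCm : ∀ k, MeasurableSet (C k) := by
      intro k; rw [hC]; exact lev_meas hwm _
    have hAa : Antitone A := by
      intro k k' hkk' x hx
      simp only [hA, Set.mem_setOf_eq] at hx ⊢
      have : (k:ℝ) ≤ (k':ℝ) := by exact_mod_cast hkk'
      nlinarith
    have hBa : Antitone B := by
      intro k k' hkk' x hx
      simp only [hB, Set.mem_setOf_eq] at hx ⊢
      have : (k:ℝ) ≤ (k':ℝ) := by exact_mod_cast hkk'
      nlinarith
    have hA0 : A 0 = Set.univ := by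
      ext x; simp only [hA, Set.mem_setOf_eq, Set.mem_univ, iff_true, Nat.cast_zero, zero_mul,
        add_zero]
      exact hlbu x
    have hB0 : B 0 = Set.univ := by
      ext x; simp only [hB, Set.mem_setOf_eq, Set.mem_univ, iff_true, Nat.cast_zero, zero_mul,
        add_zero]
      exact hlbv x
    have hAe : ∀ k, 1 ≤ k → n + 1 ≤ k → A k = ∅ := by
      intro k _ hk
      ext x
      simp only [hA, Set.mem_setOf_eq, Set.mem_empty_iff_false, iff_false, not_le]
      have h1 : u x ≤ M := hubu x
      have h2 : ((n:ℝ) + 1) ≤ (k:ℝ) := by exact_mod_cast hk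
      have h5 : ((n:ℝ) + 1) * δ ≤ (k:ℝ) * δ := mul_le_mul_of_nonneg_right h2 hδ.le
      linarith [hMc]
    have hBe : ∀ k, 1 ≤ k → n + 1 ≤ k → B k = ∅ := by
      intro k _ hk
      ext x
      simp only [hB, Set.mem_setOf_eq, Set.mem_empty_iff_false, iff_false, not_le]
      have h1 : v x ≤ M := hubv x
      have h2 : ((n:ℝ) + 1) ≤ (k:ℝ) := by exact_mod_cast hk
      have h5 : ((n:ℝ) + 1) * δ ≤ (k:ℝ) * δ := mul_le_mul_of_nonneg_right h2 hδ.le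
      linarith [hMc]
    have hCe : ∀ k, 2 * n + 1 ≤ k → C k = ∅ := by
      intro k hk
      ext x
      simp only [hC, Set.mem_setOf_eq, Set.mem_empty_iff_false, iff_false, not_le]
      have h1 : w x ≤ u x + v x := hwleuv x
      have h2 : u x + v x ≤ 2 * M := by have := hubu x; have := hubv x; linarith
      have h3 : (2 * (n:ℝ) + 1) ≤ (k:ℝ) := by exact_mod_cast hk
      have h4 : 2 * M = 2 * c + (2 * (n:ℝ)) * δ := by rw [← hMc]; ring
      have h5 : (2 * (n:ℝ) + 1) * δ ≤ (k:ℝ) * δ := mul_le_mul_of_nonneg_right h3 hδ.le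
      linarith
    -- approximations
    have hlbuv : ∀ x, 2 * c ≤ u x + v x := by
      intro x; have := hlbu x; have := hlbv x; linarith
    have happroxU := approx hK hu hδ n hlbu
    have happroxV := approx hK hv hδ n hlbv
    have happroxUV := approx (w := fun x => u x + v x) hK (hu.add hv) hδ (2 * n) hlbuv
    rw [hMc] at happroxU happroxV
    have hend : 2 * c + ((2 * n : ℕ) : ℝ) * δ = 2 * M := by
      push_cast
      linarith [hMc]
    rw [hend] at happroxUV
    -- convert the sums to chain form
    have hsumU : ∑ m ∈ Finset.range n, φ {x | c + ((m:ℝ) + 1) * δ ≤ u x} =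
        ∑ m ∈ Finset.range n, φ (A (m + 1)) := by
      refine Finset.sum_congr rfl (fun m _ => congrArg φ ?_)
      rw [hA]; push_cast; ring_nf
    have hsumV : ∑ m ∈ Finset.range n, φ {x | c + ((m:ℝ) + 1) * δ ≤ v x} =
        ∑ m ∈ Finset.range n, φ (B (m + 1)) := by
      refine Finset.sum_congr rfl (fun m _ => congrArg φ ?_)
      rw [hB]; push_cast; ring_nf
    have hsumUV : ∑ m ∈ Finset.range (2 * n), φ {x | 2 * c + ((m:ℝ) + 1) * δ ≤ u x + v x} =
        ∑ m ∈ Finset.range (2 * n), φ (D (m + 1)) := by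
      refine Finset.sum_congr rfl (fun m _ => congrArg φ ?_)
      rw [hD]; push_cast; ring_nf
    rw [hsumU] at happroxU
    rw [hsumV] at happroxV
    rw [hsumUV] at happroxUV
    -- compare D sums and C sums
    have hDCm : ∀ m : ℕ, |φ (D (m + 1)) - φ (C (m + 1))| ≤
        2 * (cvar φ (D (m + 3)) - cvar φ (D (m + 1))) := by
      intro m
      have hCD : C (m + 1) ⊆ D (m + 1) := by
        intro x hx
        simp only [hC, hD, Set.mem_setOf_eq] at hx ⊢
        have := hwleuv x
        linarith
      have hDC : D (m + 3) ⊆ C (m + 1) := by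
        intro x hx
        simp only [hC, hD, Set.mem_setOf_eq] at hx ⊢
        have := huvlew x
        have e : ((m + 3 : ℕ) : ℝ) = ((m + 1 : ℕ) : ℝ) + 2 := by push_cast; ring
        rw [e] at hx
        linarith
      have h1 := abs_sub_le_cvar hK (hDm (m + 3)) (hDm (m + 1)) (hDC.trans hCD)
      have h2 := abs_sub_le_cvar hK (hDm (m + 3)) (hCm (m + 1)) hDC
      have h3 := cvar_mono hK (hCm (m + 1)) (hDm (m + 1)) hCD
      have h4 := abs_sub_le (φ (D (m + 1))) (φ (D (m + 3))) (φ (C (m + 1)))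
      have h5 : |φ (D (m + 3)) - φ (C (m + 1))| = |φ (C (m + 1)) - φ (D (m + 3))| :=
        abs_sub_comm _ _
      linarith
    have htel2 : ∑ m ∈ Finset.range (2 * n),
        (cvar φ (D (m + 3)) - cvar φ (D (m + 1))) =
        (cvar φ (D (2 * n + 2)) - cvar φ (D 2)) + (cvar φ (D (2 * n + 1)) - cvar φ (D 1)) := by
      have h1 := Finset.sum_range_sub (fun m => cvar φ (D (m + 2))) (2 * n)
      have h2 := Finset.sum_range_sub (fun m => cvar φ (D (m + 1))) (2 * n)
      have e : ∀ m ∈ Finset.range (2 * n),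
          cvar φ (D (m + 3)) - cvar φ (D (m + 1)) =
          (cvar φ (D (m + 1 + 2)) - cvar φ (D (m + 2))) +
            (cvar φ (D (m + 1 + 1)) - cvar φ (D (m + 1))) := by
        intro m _
        have e1 : m + 1 + 2 = m + 3 := by omega
        have e2 : m + 1 + 1 = m + 2 := by omega
        rw [e1, e2]; ring
      rw [Finset.sum_congr rfl e, Finset.sum_add_distrib, h1, h2]
    have hE2 : |(∑ m ∈ Finset.range (2 * n), φ (D (m + 1))) -
        ∑ m ∈ Finset.range (2 * n), φ (C (m + 1))| ≤ 4 * K := by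
      rw [← Finset.sum_sub_distrib]
      refine le_trans (Finset.abs_sum_le_sum_abs _ _) ?_
      refine le_trans (Finset.sum_le_sum (fun m _ => hDCm m)) ?_
      have : ∑ m ∈ Finset.range (2 * n), 2 * (cvar φ (D (m + 3)) - cvar φ (D (m + 1))) =
          2 * ((cvar φ (D (2 * n + 2)) - cvar φ (D 2)) +
            (cvar φ (D (2 * n + 1)) - cvar φ (D 1))) := by
        rw [← Finset.mul_sum, htel2]
      rw [this]
      have b1 := cvar_le_K hK (hDm (2 * n + 2))
      have b2 := cvar_le_K hK (hDm (2 * n + 1))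
      have b3 := cvar_nonneg hK (hDm 2)
      have b4 := cvar_nonneg hK (hDm 1)
      linarith
    -- discrete subadditivity
    have hlemD := lemD h0 hsub (n + 1) A B (n + 1) (2 * n + 3) hAm hBm hAa hBa hA0 hB0
      hAe hBe (by omega)
    have hlemD2 : ∑ m ∈ Finset.range (2 * n + 3), φ (C (m + 1)) ≤
        (∑ m ∈ Finset.range (2 * n + 3), φ (A (m + 1))) +
          ∑ m ∈ Finset.range (2 * n + 3), φ (B (m + 1)) := by
      refine le_trans (le_of_eq ?_) hlemD
      exact Finset.sum_congr rfl (fun m _ => (congrArg φ (hCw (m + 1))).symm)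
    -- padding
    have hpadC : ∑ m ∈ Finset.range (2 * n), φ (C (m + 1)) =
        ∑ m ∈ Finset.range (2 * n + 3), φ (C (m + 1)) := by
      refine Finset.sum_subset (Finset.range_subset_range.mpr (by omega)) ?_
      intro m hm hnot
      rw [hCe (m + 1) (by simp only [Finset.mem_range] at hm hnot; omega), h0]
    have hpadA : ∑ m ∈ Finset.range (2 * n + 3), φ (A (m + 1)) =
        ∑ m ∈ Finset.range n, φ (A (m + 1)) := by
      refine (Finset.sum_subset (Finset.range_subset_range.mpr (by omega)) ?_).symm
      intro m hm hnot
      rw [hAe (m + 1) (by omega) (by simp only [Finset.mem_range] at hm hnot; omega), h0]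
    have hpadB : ∑ m ∈ Finset.range (2 * n + 3), φ (B (m + 1)) =
        ∑ m ∈ Finset.range n, φ (B (m + 1)) := by
      refine (Finset.sum_subset (Finset.range_subset_range.mpr (by omega)) ?_).symm
      intro m hm hnot
      rw [hBe (m + 1) (by omega) (by simp only [Finset.mem_range] at hm hnot; omega), h0]
    -- hat identities
    have hatu : hat u = (∫ t in Set.Ioc c M, φ {x | t ≤ u x}) + c * φ Set.univ :=
      hat_Ioc h0 hhat hlbu hubu
    have hatv : hat v = (∫ t in Set.Ioc c M, φ {x | t ≤ v x}) + c * φ Set.univ :=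
      hat_Ioc h0 hhat hlbv hubv
    have hatuv : hat (fun x => u x + v x) =
        (∫ t in Set.Ioc (2 * c) (2 * M), φ {x | t ≤ u x + v x}) + (2 * c) * φ Set.univ :=
      hat_Ioc h0 hhat hlbuv (fun x => by have := hubu x; have := hubv x; linarith)
    -- put everything together
    obtain ⟨e1, e2⟩ := abs_le.mp happroxU
    obtain ⟨e3, e4⟩ := abs_le.mp happroxV
    obtain ⟨e5, e6⟩ := abs_le.mp happroxUV
    obtain ⟨e7, e8⟩ := abs_le.mp hE2
    have hP1 : δ * (∑ m ∈ Finset.range (2 * n), φ (D (m + 1))) ≤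
        δ * ((∑ m ∈ Finset.range (2 * n), φ (C (m + 1))) + 4 * K) := by
      have h := sub_le_iff_le_add.mp e8
      exact mul_le_mul_of_nonneg_left (by linarith) hδ.le
    have hP2 : δ * (∑ m ∈ Finset.range (2 * n), φ (C (m + 1))) ≤
        δ * ((∑ m ∈ Finset.range n, φ (A (m + 1))) + ∑ m ∈ Finset.range n, φ (B (m + 1))) := by
      refine mul_le_mul_of_nonneg_left ?_ hδ.le
      rw [hpadC]
      refine le_trans hlemD2 ?_
      rw [hpadA, hpadB]
    rw [hatu, hatv, hatuv]
    have hblow : δ * ((∑ m ∈ Finset.range (2 * n), φ (C (m + 1))) + 4 * K) =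
        δ * (∑ m ∈ Finset.range (2 * n), φ (C (m + 1))) + 4 * (K * δ) := by ring
    have hblow2 : δ * ((∑ m ∈ Finset.range n, φ (A (m + 1))) +
        ∑ m ∈ Finset.range n, φ (B (m + 1))) =
        δ * (∑ m ∈ Finset.range n, φ (A (m + 1))) +
          δ * (∑ m ∈ Finset.range n, φ (B (m + 1))) := by ring
    linarith [hP1, hP2, hblow, hblow2, e1, e2, e3, e4, e5, e6]
  -- conclude
  refine le_of_forall_pos_le_add ?_
  intro ε hε
  obtain ⟨n, hn⟩ := exists_nat_gt (7 * K * (M - c) / ε)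
  have hnn : (0:ℝ) ≤ 7 * K * (M - c) / ε := by
    apply div_nonneg _ hε.le
    nlinarith
  have hn1 : 1 ≤ n := by
    rcases Nat.eq_zero_or_pos n with h | h
    · exfalso; rw [h] at hn; norm_num at hn; linarith
    · exact h
  have h2 := main n hn1
  have hnp : (0:ℝ) < n := by exact_mod_cast hn1
  have h3 : 7 * K * ((M - c) / n) ≤ ε := by
    have hlt : 7 * K * (M - c) < n * ε := by
      have := (div_lt_iff₀ hε).mp hn
      linarith
    rw [show 7 * K * ((M - c) / (n:ℝ)) = (7 * K * (M - c)) / n by ring]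
    rw [div_le_iff₀ hnp]
    linarith [mul_comm (n:ℝ) ε]
  linarith

private lemma homog (h0 : φ ∅ = 0) (hK : BVB φ K)
    (hhat : ∀ (f : J → ℝ) (c : ℝ), (∀ x, c ≤ f x) →
      hat f = (∫ t in Set.Ioi c, φ {x | t ≤ f x}) + c * φ Set.univ)
    (f : J → ℝ) (hf : Measurable f) (Mf : ℝ) (hMf : ∀ x, |f x| ≤ Mf)
    {a : ℝ} (ha : 0 < a) : hat (fun x => a * f x) = a * hat f := by
  have hKnn : 0 ≤ K :=
    le_trans (cvar_nonneg hK MeasurableSet.univ) (cvar_le_K hK MeasurableSet.univ)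
  set c : ℝ := -(|Mf| + 1) with hc
  set M : ℝ := |Mf| + 1 with hM
  have hcM : c < M := by
    rw [hc, hM]; have := abs_nonneg Mf; linarith
  have hlbf : ∀ x, c ≤ f x := by
    intro x
    have := (abs_le.mp (le_trans (hMf x) (le_abs_self Mf))).1
    rw [hc]; linarith
  have hubf : ∀ x, f x ≤ M := by
    intro x
    have := (abs_le.mp (le_trans (hMf x) (le_abs_self Mf))).2
    rw [hM]; linarith
  have main : ∀ n : ℕ, 1 ≤ n →
      |hat (fun x => a * f x) - a * hat f| ≤ 2 * a * K * ((M - c) / n) := by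
    intro n hn
    set δ : ℝ := (M - c) / n with hδdef
    have hnR : (0:ℝ) < n := by exact_mod_cast hn
    have hδ : 0 < δ := by rw [hδdef]; apply div_pos; linarith; exact hnR
    have hMc : c + (n:ℝ) * δ = M := by rw [hδdef]; field_simp; ring
    have haδ : 0 < a * δ := mul_pos ha hδ
    have hlbaf : ∀ x, a * c ≤ a * f x := fun x => mul_le_mul_of_nonneg_left (hlbf x) ha.le
    have hubaf : ∀ x, a * f x ≤ a * M := fun x => mul_le_mul_of_nonneg_left (hubf x) ha.le
    have happrox1 := approx hK hf hδ n hlbf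
    have happrox2 := approx (w := fun x => a * f x) hK (measurable_const.mul hf) haδ n hlbaf
    rw [hMc] at happrox1
    have hend2 : a * c + (n:ℝ) * (a * δ) = a * M := by
      have hnd : (n:ℝ) * δ = M - c := by linarith [hMc]
      nlinarith
    rw [hend2] at happrox2
    have hset : ∀ m : ℕ, {x | a * c + ((m:ℝ) + 1) * (a * δ) ≤ a * f x} =
        {x | c + ((m:ℝ) + 1) * δ ≤ f x} := by
      intro m
      ext x
      simp only [Set.mem_setOf_eq]
      rw [show a * c + ((m:ℝ) + 1) * (a * δ) = a * (c + ((m:ℝ) + 1) * δ) by ring]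
      exact mul_le_mul_iff_right₀ ha
    rw [Finset.sum_congr rfl (fun m _ => congrArg φ (hset m))] at happrox2
    have hatf : hat f = (∫ t in Set.Ioc c M, φ {x | t ≤ f x}) + c * φ Set.univ :=
      hat_Ioc h0 hhat hlbf hubf
    have hataf : hat (fun x => a * f x) =
        (∫ t in Set.Ioc (a * c) (a * M), φ {x | t ≤ a * f x}) + (a * c) * φ Set.univ :=
      hat_Ioc h0 hhat hlbaf hubaf
    obtain ⟨e1, e2⟩ := abs_le.mp happrox1
    obtain ⟨e3, e4⟩ := abs_le.mp happrox2
    rw [hatf, hataf, abs_le]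
    constructor
    · nlinarith
    · nlinarith
  have hsmall : ∀ ε : ℝ, 0 < ε → |hat (fun x => a * f x) - a * hat f| ≤ 0 + ε := by
    intro ε hε
    obtain ⟨n, hn⟩ := exists_nat_gt (max 1 (2 * a * K * (M - c) / ε))
    have hn1 : 1 ≤ n := by
      have h1 : (1:ℝ) < n := lt_of_le_of_lt (le_max_left _ _) hn
      exact_mod_cast h1.le
    have hnp : (0:ℝ) < n := by exact_mod_cast hn1
    have h2 := main n hn1
    have h3 : 2 * a * K * ((M - c) / n) ≤ ε := by
      have hlt : 2 * a * K * (M - c) < n * ε := by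
        have := (div_lt_iff₀ hε).mp (lt_of_le_of_lt (le_max_right 1 _) hn)
        linarith
      rw [show 2 * a * K * ((M - c) / (n:ℝ)) = (2 * a * K * (M - c)) / n by ring]
      rw [div_le_iff₀ hnp]
      linarith [mul_comm (n:ℝ) ε]
    linarith
  have := le_of_forall_pos_le_add hsmall
  have habs : |hat (fun x => a * f x) - a * hat f| = 0 :=
    le_antisymm this (abs_nonneg _)
  have := abs_eq_zero.mp habs
  linarith

end Assemble

open MeasureTheory in
theorem stmt_12 {J : Type*} [MeasurableSpace J] (φ : Set J → ℝ)
    (h0 : φ ∅ = 0)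
    (hbv : ∃ K : ℝ, ∀ (n : ℕ) (X : ℕ → Set J),
        (∀ i ≤ n, MeasurableSet (X i)) → X 0 = ∅ → X n = Set.univ →
        (∀ i < n, X i ⊆ X (i + 1)) →
        ∑ i ∈ Finset.range n, |φ (X (i + 1)) - φ (X i)| ≤ K)
    (hat : (J → ℝ) → ℝ)
    (hhat : ∀ (f : J → ℝ) (c : ℝ), (∀ x, c ≤ f x) →
      hat f = (∫ t in Set.Ioi c, φ {x | t ≤ f x}) + c * φ Set.univ) :
    (∀ f g : J → ℝ, Measurable f → Measurable g →
      (∃ M : ℝ, ∀ x, |f x| ≤ M) → (∃ M : ℝ, ∀ x, |g x| ≤ M) →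
      ∀ a b : ℝ, 0 ≤ a → 0 ≤ b → a + b = 1 →
        hat (fun x => a * f x + b * g x) ≤ a * hat f + b * hat g) ↔
    (∀ X Y : Set J, MeasurableSet X → MeasurableSet Y →
      φ (X ∪ Y) + φ (X ∩ Y) ≤ φ X + φ Y) := by
  classical
  obtain ⟨K, hK0⟩ := hbv
  have hK : BVB φ K := hK0
  constructor
  · -- convexity implies submodularity
    intro hconv X Y hX hY
    set f : J → ℝ := fun x => if x ∈ X then (1:ℝ) else 0 with hf
    set g : J → ℝ := fun x => if x ∈ Y then (1:ℝ) else 0 with hg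
    have hfm : Measurable f := by
      rw [hf]; exact Measurable.ite hX measurable_const measurable_const
    have hgm : Measurable g := by
      rw [hg]; exact Measurable.ite hY measurable_const measurable_const
    have hfb : ∀ x, |f x| ≤ 1 := by
      intro x; rw [hf]; dsimp only; split <;> norm_num
    have hgb : ∀ x, |g x| ≤ 1 := by
      intro x; rw [hg]; dsimp only; split <;> norm_num
    have hf0 : ∀ x, (0:ℝ) ≤ f x := by
      intro x; rw [hf]; dsimp only; split <;> norm_num
    have hg0 : ∀ x, (0:ℝ) ≤ g x := by
      intro x; rw [hg]; dsimp only; split <;> norm_num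
    -- hat of an indicator
    have hind : ∀ (Z : Set J) (h : J → ℝ), (h = fun x => if x ∈ Z then (1:ℝ) else 0) →
        hat h = φ Z := by
      intro Z h hh
      have h0h : ∀ x, (0:ℝ) ≤ h x := by
        intro x; rw [hh]; dsimp only; split <;> norm_num
      rw [hhat h 0 h0h]
      have heq : Set.EqOn (fun t => φ {x | t ≤ h x})
          (fun t => (Set.Ioc (0:ℝ) 1).indicator (fun _ => φ Z) t) (Set.Ioi (0:ℝ)) := by
        intro t ht
        have ht' : (0:ℝ) < t := ht
        show φ {x | t ≤ h x} = (Set.Ioc (0:ℝ) 1).indicator (fun _ => φ Z) t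
        by_cases h1 : t ≤ 1
        · have hXt : {x | t ≤ h x} = Z := by
            ext x
            simp only [Set.mem_setOf_eq, hh]
            constructor
            · intro hxt
              by_contra hx
              rw [if_neg hx] at hxt
              linarith
            · intro hx
              rw [if_pos hx]
              exact h1
          rw [hXt, Set.indicator_of_mem (Set.mem_Ioc.mpr ⟨ht', h1⟩)]
        · have hXt : {x | t ≤ h x} = ∅ := by
            ext x
            simp only [Set.mem_setOf_eq, Set.mem_empty_iff_false, iff_false, not_le, hh]
            split <;> [linarith; linarith]
          rw [hXt, h0, Set.indicator_of_notMem (fun hmem => h1 (Set.mem_Ioc.mp hmem).2)]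
      rw [setIntegral_congr_fun measurableSet_Ioi heq,
        setIntegral_indicator measurableSet_Ioc,
        Set.inter_eq_self_of_subset_right Set.Ioc_subset_Ioi_self,
        setIntegral_const, Real.volume_real_Ioc]
      norm_num
    have hatf : hat f = φ X := hind X f hf
    have hatg : hat g = φ Y := hind Y g hg
    -- hat of the mixture
    have hmix : hat (fun x => 2⁻¹ * f x + 2⁻¹ * g x) =
        2⁻¹ * φ (X ∪ Y) + 2⁻¹ * φ (X ∩ Y) := by
      set m : J → ℝ := fun x => 2⁻¹ * f x + 2⁻¹ * g x with hm
      have h0m : ∀ x, (0:ℝ) ≤ m x := by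
        intro x; rw [hm]
        have := hf0 x; have := hg0 x
        dsimp only; positivity
      rw [hhat m 0 h0m]
      have heq : Set.EqOn (fun t => φ {x | t ≤ m x})
          (fun t => (Set.Ioc (0:ℝ) 2⁻¹).indicator (fun _ => φ (X ∪ Y)) t
            + (Set.Ioc (2⁻¹:ℝ) 1).indicator (fun _ => φ (X ∩ Y)) t) (Set.Ioi (0:ℝ)) := by
        intro t ht
        have ht' : (0:ℝ) < t := ht
        show φ {x | t ≤ m x} = (Set.Ioc (0:ℝ) 2⁻¹).indicator (fun _ => φ (X ∪ Y)) t
            + (Set.Ioc (2⁻¹:ℝ) 1).indicator (fun _ => φ (X ∩ Y)) t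
        have hmval : ∀ x, m x = (if x ∈ X then (2⁻¹:ℝ) else 0) +
            (if x ∈ Y then (2⁻¹:ℝ) else 0) := by
          intro x
          rw [hm, hf, hg]
          dsimp only
          split <;> split <;> norm_num
        by_cases h1 : t ≤ 2⁻¹
        · have hset : {x | t ≤ m x} = X ∪ Y := by
            ext x
            simp only [Set.mem_setOf_eq, Set.mem_union, hmval x]
            constructor
            · intro hxt
              by_contra hx
              push_neg at hx
              rw [if_neg hx.1, if_neg hx.2] at hxt
              linarith
            · intro hx
              rcases hx with hx | hx
              · rw [if_pos hx]
                split <;> [linarith; linarith]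
              · rw [if_pos hx]
                split <;> [linarith; linarith]
          rw [hset, Set.indicator_of_mem (Set.mem_Ioc.mpr ⟨ht', h1⟩),
            Set.indicator_of_notMem (fun hmem => by
              have := (Set.mem_Ioc.mp hmem).1; linarith)]
          ring
        · push_neg at h1
          by_cases h2 : t ≤ 1
          · have hset : {x | t ≤ m x} = X ∩ Y := by
              ext x
              simp only [Set.mem_setOf_eq, Set.mem_inter_iff, hmval x]
              constructor
              · intro hxt
                constructor
                · by_contra hx
                  rw [if_neg hx] at hxt
                  split at hxt <;> linarith
                · by_contra hx
                  rw [if_neg hx] at hxt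
                  split at hxt <;> linarith
              · rintro ⟨hx1, hx2⟩
                rw [if_pos hx1, if_pos hx2]
                linarith
            rw [hset, Set.indicator_of_notMem (fun hmem => by
                have := (Set.mem_Ioc.mp hmem).2; linarith),
              Set.indicator_of_mem (Set.mem_Ioc.mpr ⟨h1, h2⟩)]
            ring
          · push_neg at h2
            have hset : {x | t ≤ m x} = ∅ := by
              ext x
              simp only [Set.mem_setOf_eq, Set.mem_empty_iff_false, iff_false, not_le, hmval x]
              split <;> split <;> linarith
            rw [hset, h0, Set.indicator_of_notMem (fun hmem => by
                have := (Set.mem_Ioc.mp hmem).2; linarith),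
              Set.indicator_of_notMem (fun hmem => by
                have := (Set.mem_Ioc.mp hmem).2; linarith)]
            ring
      rw [setIntegral_congr_fun measurableSet_Ioi heq]
      have hi1 : Integrable ((Set.Ioc (0:ℝ) 2⁻¹).indicator (fun _ => φ (X ∪ Y)))
          (volume.restrict (Set.Ioi (0:ℝ))) := by
        rw [integrable_indicator_iff measurableSet_Ioc]
        refine integrableOn_const (lt_top_iff_ne_top.mp ?_)
        refine lt_of_le_of_lt (Measure.restrict_apply_le _ _) ?_
        rw [Real.volume_Ioc]
        exact ENNReal.ofReal_lt_top
      have hi2 : Integrable ((Set.Ioc (2⁻¹:ℝ) 1).indicator (fun _ => φ (X ∩ Y)))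
          (volume.restrict (Set.Ioi (0:ℝ))) := by
        rw [integrable_indicator_iff measurableSet_Ioc]
        refine integrableOn_const (lt_top_iff_ne_top.mp ?_)
        refine lt_of_le_of_lt (Measure.restrict_apply_le _ _) ?_
        rw [Real.volume_Ioc]
        exact ENNReal.ofReal_lt_top
      have hsub2 : Set.Ioc (2⁻¹:ℝ) 1 ⊆ Set.Ioi (0:ℝ) := fun x hx =>
        lt_trans (by norm_num) (Set.mem_Ioc.mp hx).1
      rw [integral_add hi1 hi2,
        setIntegral_indicator measurableSet_Ioc,
        setIntegral_indicator measurableSet_Ioc,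
        Set.inter_eq_self_of_subset_right Set.Ioc_subset_Ioi_self,
        Set.inter_eq_self_of_subset_right hsub2,
        setIntegral_const, setIntegral_const, Real.volume_real_Ioc, Real.volume_real_Ioc]
      norm_num
    have hc := hconv f g hfm hgm ⟨1, hfb⟩ ⟨1, hgb⟩ 2⁻¹ 2⁻¹ (by norm_num) (by norm_num)
      (by norm_num)
    rw [hatf, hatg, hmix] at hc
    linarith
  · -- submodularity implies convexity
    intro hsub f g hf hg hfb hgb a b ha hb hab
    obtain ⟨Mf, hMf⟩ := hfb
    obtain ⟨Mg, hMg⟩ := hgb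
    rcases eq_or_lt_of_le ha with rfl | ha0
    · have hb1 : b = 1 := by linarith
      subst hb1
      have hfn : (fun x => 0 * f x + 1 * g x) = g := by funext x; ring
      rw [hfn]
      norm_num
    rcases eq_or_lt_of_le hb with rfl | hb0
    · have ha1 : a = 1 := by linarith
      subst ha1
      have hfn : (fun x => 1 * f x + 0 * g x) = f := by funext x; ring
      rw [hfn]
      norm_num
    have h1 := subadd h0 hK hsub hhat (fun x => a * f x) (fun x => b * g x)
      (measurable_const.mul hf) (measurable_const.mul hg) (a * Mf) (b * Mg)
      (fun x => by rw [abs_mul, abs_of_pos ha0]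
                   exact mul_le_mul_of_nonneg_left (hMf x) ha0.le)
      (fun x => by rw [abs_mul, abs_of_pos hb0]
                   exact mul_le_mul_of_nonneg_left (hMg x) hb0.le)
    have h2 := homog h0 hK hhat f hf Mf hMf ha0
    have h3 := homog h0 hK hhat g hg Mg hMg hb0
    calc hat (fun x => a * f x + b * g x) ≤
        hat (fun x => a * f x) + hat (fun x => b * g x) := h1
      _ = a * hat f + b * hat g := by rw [h2, h3]
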